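/- There exists a constant C > 0 such that for every g ∈ C¹([0,1], ℝ) with g(0) = 0, one has ∫₀¹ |g(r)|² r dr ≤ C ∫₀¹ |(d/dr)(r g(r))|² (1 − r²)/r dr (the right-hand side may be +∞). -/

import Mathlib

open MeasureTheory Set Filter Topology

set_option maxHeartbeats 1000000 in
/-- There is `C > 0` such that for every `g ∈ C¹([0,1])` with `g(0)=0`,
`∫₀¹ |g|² r dr ≤ C ∫₀¹ |(d/dr)(rg)|² (1−r²)/r dr` (RHS may be `+∞`). -/
theorem stmt3 :
    ∃ C : ℝ, 0 < C ∧ ∀ g : ℝ → ℝ, ContDiff ℝ 1 g → g 0 = 0 →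
      (∫⁻ r in Ioo (0:ℝ) 1, ENNReal.ofReal (|g r| ^ 2 * r))
        ≤ ENNReal.ofReal C * ∫⁻ r in Ioo (0:ℝ) 1,
            ENNReal.ofReal (|deriv (fun s => s * g s) r| ^ 2 * (1 - r ^ 2) / r) := by
  refine ⟨4, by norm_num, ?_⟩
  intro g hg hg0
  set h : ℝ → ℝ := fun s => s * g s with hh_def
  have hgc : Continuous g := hg.continuous
  have hhC : ContDiff ℝ 1 h := contDiff_id.mul hg
  have hhc : Continuous h := hhC.continuous
  have hdc : Continuous (deriv h) := hhC.continuous_deriv le_rfl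
  have hhd : ∀ x, HasDerivAt h (deriv h x) x :=
    fun x => (hhC.differentiable one_ne_zero x).hasDerivAt
  set f1 : ℝ → ℝ := fun r => |g r| ^ 2 * r with hf1_def
  set φ : ℝ → ℝ := fun r => |deriv h r| ^ 2 * (1 - r ^ 2) / r with hφ_def
  have hf1c : Continuous f1 := ((hgc.abs.pow 2).mul continuous_id)
  set I : ENNReal := ∫⁻ r in Ioo (0:ℝ) 1, ENNReal.ofReal (φ r) with hI_def
  by_cases hI : I = ⊤
  · rw [hI, ENNReal.mul_top (by norm_num)]
    exact le_top
  set R : ℝ := I.toReal with hR_def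
  -- φ is continuous away from 0
  have hφcont : ∀ ε : ℝ, 0 < ε → ContinuousOn φ (Icc ε 1) := by
    intro ε hε
    apply ContinuousOn.div
    · exact ((hdc.abs.pow 2).mul (continuous_const.sub (continuous_pow 2))).continuousOn
    · exact continuousOn_id
    · intro x hx; exact ne_of_gt (lt_of_lt_of_le hε hx.1)
  -- ∫_ε^1 φ ≤ R
  have hφR : ∀ ε ∈ Ioo (0:ℝ) 1, ∫ r in ε..1, φ r ≤ R := by
    intro ε hε
    have hint : IntegrableOn φ (Ioo ε 1) volume :=
      ((hφcont ε hε.1).integrableOn_compact isCompact_Icc).mono_set Ioo_subset_Icc_self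
    have hnn : 0 ≤ᶠ[ae (volume.restrict (Ioo ε 1))] φ := by
      refine (ae_restrict_iff' measurableSet_Ioo).2 (ae_of_all _ fun r hr => ?_)
      have hr0 : 0 < r := lt_of_le_of_lt hε.1.le hr.1
      have hr2 : r ^ 2 ≤ 1 := by nlinarith [hr.2]
      have : 0 ≤ 1 - r ^ 2 := by linarith
      positivity
    have heq : ENNReal.ofReal (∫ r in Ioo ε 1, φ r) = ∫⁻ r in Ioo ε 1, ENNReal.ofReal (φ r) :=
      ofReal_integral_eq_lintegral_ofReal hint hnn
    have hle : (∫⁻ r in Ioo ε 1, ENNReal.ofReal (φ r)) ≤ I :=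
      lintegral_mono_set (Ioo_subset_Ioo hε.1.le le_rfl)
    have : ENNReal.ofReal (∫ r in Ioo ε 1, φ r) ≤ I := heq ▸ hle
    have h2 : (∫ r in Ioo ε 1, φ r) ≤ R :=
      (ENNReal.ofReal_le_iff_le_toReal hI).1 this
    rw [intervalIntegral.integral_of_le hε.2.le, integral_Ioc_eq_integral_Ioo]
    exact h2
  -- key estimate for each ε
  have key : ∀ ε ∈ Ioo (0:ℝ) 1,
      (1/2) * ∫ r in ε..1, f1 r ≤ (h ε)^2 * (-Real.log ε) + 2 * R := by
    intro ε hε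
    obtain ⟨hε0, hε1⟩ := hε
    have huIcc : uIcc ε 1 = Icc ε 1 := uIcc_of_le hε1.le
    -- derivative of Φ(r) = h(r)² log r
    have hd : ∀ x ∈ uIcc ε 1,
        HasDerivAt (fun r => (h r)^2 * Real.log r)
          (2 * h x * deriv h x * Real.log x + (h x)^2 / x) x := by
      intro x hx
      rw [huIcc] at hx
      have hx0 : 0 < x := lt_of_lt_of_le hε0 hx.1
      have H1 : HasDerivAt (fun r => (h r)^2) (2 * h x * deriv h x) x := by
        simpa [mul_comm, mul_assoc, mul_left_comm, Function.comp_def] using (hasDerivAt_pow 2 (h x)).comp x (hhd x)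
      have H2 : HasDerivAt Real.log x⁻¹ x := Real.hasDerivAt_log hx0.ne'
      have := H1.mul H2
      convert this using 1
      · rfl
      · rfl
      · rfl
      · rw [div_eq_mul_inv]
    have hcont1 : ContinuousOn (fun r => 2 * h r * deriv h r * Real.log r) (Icc ε 1) := by
      apply ContinuousOn.mul
      · exact ((continuous_const.mul hhc).mul hdc).continuousOn
      · exact Real.continuousOn_log.mono (fun x hx => by
          simp only [mem_compl_iff, mem_singleton_iff]
          exact ne_of_gt (lt_of_lt_of_le hε0 hx.1))
    have hcont2 : ContinuousOn (fun r => (h r)^2 / r) (Icc ε 1) := by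
      apply ContinuousOn.div
      · exact (hhc.pow 2).continuousOn
      · exact continuousOn_id
      · intro x hx; exact ne_of_gt (lt_of_lt_of_le hε0 hx.1)
    have hii1 : IntervalIntegrable (fun r => 2 * h r * deriv h r * Real.log r) volume ε 1 :=
      (hcont1.mono (by rw [huIcc])).intervalIntegrable
    have hii2 : IntervalIntegrable (fun r => (h r)^2 / r) volume ε 1 :=
      (hcont2.mono (by rw [huIcc])).intervalIntegrable
    have hiif1 : IntervalIntegrable f1 volume ε 1 := hf1c.intervalIntegrable ε 1
    have hiiφ : IntervalIntegrable φ volume ε 1 :=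
      ((hφcont ε hε0).mono (by rw [huIcc])).intervalIntegrable
    have ibp : ∫ r in ε..1, (2 * h r * deriv h r * Real.log r + (h r)^2 / r)
        = (h 1)^2 * Real.log 1 - (h ε)^2 * Real.log ε :=
      intervalIntegral.integral_eq_sub_of_hasDerivAt hd (hii1.add hii2)
    rw [intervalIntegral.integral_add hii1 hii2] at ibp
    have hlog1 : Real.log 1 = 0 := Real.log_one
    have eq3 : ∫ r in ε..1, (h r)^2 / r = ∫ r in ε..1, f1 r := by
      apply intervalIntegral.integral_congr
      intro r hr
      rw [huIcc] at hr
      have hr0 : (0:ℝ) < r := lt_of_lt_of_le hε0 hr.1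
      simp only [hh_def, hf1_def, sq_abs]
      field_simp
    -- pointwise estimate
    have mono : ∫ r in ε..1, -(2 * h r * deriv h r * Real.log r)
        ≤ ∫ r in ε..1, ((1/2) * f1 r + 2 * φ r) := by
      apply intervalIntegral.integral_mono_on hε1.le hii1.neg
        ((hiif1.const_mul _).add (hiiφ.const_mul _))
      intro r hr
      simp only [Pi.neg_apply]
      have hr0 : (0:ℝ) < r := lt_of_lt_of_le hε0 hr.1
      have hr1 : r ≤ 1 := hr.2
      set l : ℝ := Real.log r with hl_def
      have hl0 : l ≤ 0 := Real.log_nonpos hr0.le hr1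
      have hrL : r * (-l) ≤ 1 - r := by
        have h1 : Real.log r⁻¹ ≤ r⁻¹ - 1 := Real.log_le_sub_one_of_pos (inv_pos.2 hr0)
        rw [Real.log_inv] at h1
        have := mul_le_mul_of_nonneg_left h1 hr0.le
        calc r * (-l) ≤ r * (r⁻¹ - 1) := this
          _ = 1 - r := by field_simp
      set G : ℝ := g r with hG_def
      set v : ℝ := deriv h r with hv_def
      have hf1r : f1 r = G^2 * r := by simp [hf1_def, sq_abs, hG_def]
      have hφr : φ r = v^2 * (1 - r^2) / r := by simp [hφ_def, sq_abs, hv_def]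
      have hhr : h r = r * G := rfl
      clear_value l G v
      rw [hf1r, hφr, hhr]
      have e : (1/2) * (G^2 * r) + 2 * (v^2 * (1 - r^2) / r)
          = (G^2 * r^2 + 4 * v^2 * (1 - r^2)) / (2 * r) := by
        field_simp; ring
      rw [e, le_div_iff₀ (by positivity)]
      have hA : (r * l)^2 ≤ (1 - r)^2 := by
        have h1 : -(1-r) ≤ r * l := by nlinarith
        have h2 : r * l ≤ 1 - r := by nlinarith
        exact sq_le_sq' h1 h2
      have hB : (1 - r)^2 ≤ 1 - r^2 := by nlinarith
      have hC : v^2 * (r * l)^2 ≤ v^2 * (1 - r^2) :=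
        mul_le_mul_of_nonneg_left (hA.trans hB) (sq_nonneg v)
      nlinarith [sq_nonneg (r * G + 2 * r * v * l), hC]
    have isplit : ∫ r in ε..1, ((1/2) * f1 r + 2 * φ r)
        = (1/2) * (∫ r in ε..1, f1 r) + 2 * ∫ r in ε..1, φ r := by
      rw [intervalIntegral.integral_add (hiif1.const_mul _) (hiiφ.const_mul _),
        intervalIntegral.integral_const_mul, intervalIntegral.integral_const_mul]
    have hneg : ∫ r in ε..1, -(2 * h r * deriv h r * Real.log r)
        = -∫ r in ε..1, (2 * h r * deriv h r * Real.log r) :=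
      intervalIntegral.integral_neg
    have hφRε : ∫ r in ε..1, φ r ≤ R := hφR ε ⟨hε0, hε1⟩
    rw [hneg, isplit] at mono
    rw [hlog1] at ibp
    rw [eq3] at ibp
    -- ibp : ∫ 2hh'log + ∫ f1 = 0 - hε² log ε
    linarith
  -- limits as ε → 0⁺
  have hL_def : ∀ ε : ℝ, ∫ r in ε..1, f1 r
      = (∫ r in (0:ℝ)..1, f1 r) - ∫ r in (0:ℝ)..ε, f1 r := by
    intro ε
    rw [intervalIntegral.integral_interval_sub_left (hf1c.intervalIntegrable 0 1)
      (hf1c.intervalIntegrable 0 ε)]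
  have hprim : Continuous fun ε : ℝ => ∫ r in (0:ℝ)..ε, f1 r :=
    intervalIntegral.continuous_primitive (fun a b => hf1c.intervalIntegrable a b) 0
  have FL : Tendsto (fun ε : ℝ => ∫ r in ε..1, f1 r) (𝓝[>] 0)
      (𝓝 (∫ r in (0:ℝ)..1, f1 r)) := by
    have : Tendsto (fun ε : ℝ => (∫ r in (0:ℝ)..1, f1 r) - ∫ r in (0:ℝ)..ε, f1 r)
        (𝓝[>] 0) (𝓝 ((∫ r in (0:ℝ)..1, f1 r) - ∫ r in (0:ℝ)..(0:ℝ), f1 r)) :=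
      ((continuous_const.sub hprim).tendsto 0).mono_left nhdsWithin_le_nhds
    simp only [intervalIntegral.integral_same, sub_zero] at this
    exact this.congr (fun ε => (hL_def ε).symm)
  have AL : Tendsto (fun ε : ℝ => (h ε)^2 * (-Real.log ε)) (𝓝[>] 0) (𝓝 0) := by
    have hub : Tendsto (fun ε : ℝ => ε * (g ε)^2) (𝓝[>] 0) (𝓝 0) := by
      have : Tendsto (fun ε : ℝ => ε * (g ε)^2) (𝓝 0) (𝓝 (0 * (g 0)^2)) :=
        (continuous_id.mul (hgc.pow 2)).tendsto 0
      rw [zero_mul] at this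
      exact this.mono_left nhdsWithin_le_nhds
    refine squeeze_zero' ?_ ?_ hub
    · filter_upwards [Ioo_mem_nhdsGT_of_mem (left_mem_Ico.2 one_pos)] with ε hε
      have hε0 : (0:ℝ) < ε := hε.1
      have hln : Real.log ε ≤ 0 := Real.log_nonpos hε0.le hε.2.le
      exact mul_nonneg (sq_nonneg _) (neg_nonneg.2 hln)
    · filter_upwards [Ioo_mem_nhdsGT_of_mem (left_mem_Ico.2 one_pos)] with ε hε
      obtain ⟨hε0, hε1⟩ := hε
      have hl0 : Real.log ε ≤ 0 := Real.log_nonpos hε0.le hε1.le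
      have hrL : ε * (-Real.log ε) ≤ 1 - ε := by
        have h1 : Real.log ε⁻¹ ≤ ε⁻¹ - 1 := Real.log_le_sub_one_of_pos (inv_pos.2 hε0)
        rw [Real.log_inv] at h1
        have := mul_le_mul_of_nonneg_left h1 hε0.le
        calc ε * (-Real.log ε) ≤ ε * (ε⁻¹ - 1) := this
          _ = 1 - ε := by field_simp
      have hhε : h ε = ε * g ε := rfl
      rw [hhε]
      calc (ε * g ε)^2 * (-Real.log ε) = (g ε)^2 * ε * (ε * (-Real.log ε)) := by ring
        _ ≤ (g ε)^2 * ε * (1 - ε) := by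
            apply mul_le_mul_of_nonneg_left hrL (by positivity)
        _ ≤ ε * (g ε)^2 := by nlinarith [sq_nonneg (g ε * ε)]
  have evle : ∀ᶠ ε in 𝓝[>] (0:ℝ),
      (1/2) * (∫ r in ε..1, f1 r) ≤ (h ε)^2 * (-Real.log ε) + 2 * R := by
    filter_upwards [Ioo_mem_nhdsGT_of_mem (left_mem_Ico.2 one_pos)] with ε hε
    exact key ε hε
  have final_real : (1/2) * (∫ r in (0:ℝ)..1, f1 r) ≤ 2 * R := by
    have t1 : Tendsto (fun ε : ℝ => (1/2) * ∫ r in ε..1, f1 r) (𝓝[>] 0)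
        (𝓝 ((1/2) * ∫ r in (0:ℝ)..1, f1 r)) := FL.const_mul _
    have t2 : Tendsto (fun ε : ℝ => (h ε)^2 * (-Real.log ε) + 2 * R) (𝓝[>] 0)
        (𝓝 (0 + 2 * R)) := AL.add tendsto_const_nhds
    rw [zero_add] at t2
    exact le_of_tendsto_of_tendsto t1 t2 evle
  -- assemble in ℝ≥0∞
  have hf1int : IntegrableOn f1 (Ioo (0:ℝ) 1) volume :=
    (hf1c.integrableOn_Icc).mono_set Ioo_subset_Icc_self
  have hf1nn : 0 ≤ᶠ[ae (volume.restrict (Ioo (0:ℝ) 1))] f1 := by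
    refine (ae_restrict_iff' measurableSet_Ioo).2 (ae_of_all _ fun r hr => ?_)
    have : (0:ℝ) < r := hr.1
    simp only [hf1_def]
    positivity
  have hlhs : (∫⁻ r in Ioo (0:ℝ) 1, ENNReal.ofReal (|g r| ^ 2 * r))
      = ENNReal.ofReal (∫ r in Ioo (0:ℝ) 1, f1 r) :=
    (ofReal_integral_eq_lintegral_ofReal hf1int hf1nn).symm
  have hset : (∫ r in Ioo (0:ℝ) 1, f1 r) = ∫ r in (0:ℝ)..1, f1 r := by
    rw [intervalIntegral.integral_of_le zero_le_one, integral_Ioc_eq_integral_Ioo]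
  rw [hlhs, hset, ← ENNReal.ofReal_toReal hI, ← ENNReal.ofReal_mul (by norm_num : (0:ℝ) ≤ 4)]
  exact ENNReal.ofReal_le_ofReal (by linarith)
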